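/- Let K ≥ 2, λ ∈ (0,1), and for each k ∈ {1, …, K} define the smoothed one-hot vector μ^(k) := λ e_k + ((1−λ)/K) 𝟙 ∈ ℝ^K, where e_k is the k-th standard basis vector and 𝟙 the all-ones vector. Set L := log(1 + Kλ/(1−λ)). Then for all k ≠ ℓ, the Aitchison inner product satisfies ⟨μ^(k), μ^(ℓ)⟩_A = −L²/K. -/

import Mathlib

/-- The Aitchison inner product on the open probability simplex in `ℝ^K`:
`⟨x, y⟩_A := (1/(2K)) Σ_{i,j} log(x_i/x_j) · log(y_i/y_j)`. -/
noncomputable def aitchisonInner (K : ℕ) (x y : Fin K → ℝ) : ℝ :=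
  (1 / (2 * (K : ℝ))) * ∑ i, ∑ j, Real.log (x i / x j) * Real.log (y i / y j)

/-- The smoothed one-hot vector `μ^(k) := λ e_k + ((1−λ)/K) 𝟙 ∈ ℝ^K`. -/
noncomputable def smoothOneHot (K : ℕ) (lam : ℝ) (k : Fin K) : Fin K → ℝ :=
  fun i => lam * (if i = k then 1 else 0) + (1 - lam) / (K : ℝ)

lemma double_sum_diff (K : ℕ) (e g : Fin K → ℝ) :
    ∑ i, ∑ j, (e i - e j) * (g i - g j)
      = 2 * (K : ℝ) * (∑ i, e i * g i) - 2 * (∑ i, e i) * (∑ i, g i) := by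
  have h : ∀ i : Fin K, ∑ j, (e i - e j) * (g i - g j)
      = (K : ℝ) * (e i * g i) - e i * (∑ j, g j) - (∑ j, e j) * g i
        + ∑ j, e j * g j := by
    intro i
    have : ∀ j : Fin K, (e i - e j) * (g i - g j)
        = e i * g i - e i * g j - e j * g i + e j * g j := by intro j; ring
    simp only [this, Finset.sum_add_distrib, Finset.sum_sub_distrib,
      Finset.sum_const, Finset.card_univ, Fintype.card_fin, nsmul_eq_mul,
      ← Finset.mul_sum, ← Finset.sum_mul]
  simp only [h, Finset.sum_add_distrib, Finset.sum_sub_distrib,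
    Finset.sum_const, Finset.card_univ, Fintype.card_fin, nsmul_eq_mul,
    ← Finset.mul_sum, ← Finset.sum_mul]
  ring

/-- For `k ≠ ℓ`, the Aitchison inner product of the smoothed one-hot vectors is
`⟨μ^(k), μ^(ℓ)⟩_A = −L²/K` where `L := log(1 + Kλ/(1−λ))`. -/
theorem aitchisonInner_smoothOneHot_ne
    (K : ℕ) (hK : 2 ≤ K) (lam : ℝ) (hlam : lam ∈ Set.Ioo (0 : ℝ) 1)
    (k l : Fin K) (hkl : k ≠ l) :
    aitchisonInner K (smoothOneHot K lam k) (smoothOneHot K lam l)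
      = -(Real.log (1 + (K : ℝ) * lam / (1 - lam))) ^ 2 / (K : ℝ) := by
  obtain ⟨h0, h1⟩ := hlam
  have hK0 : (0 : ℝ) < K := by exact_mod_cast (by omega : 0 < K)
  set b : ℝ := (1 - lam) / K with hb
  have hbpos : 0 < b := div_pos (by linarith) hK0
  have hapos : 0 < lam + b := by linarith
  set L : ℝ := Real.log ((lam + b) / b) with hL
  have hLval : L = Real.log (1 + (K : ℝ) * lam / (1 - lam)) := by
    have h1' : (1 : ℝ) - lam ≠ 0 := by linarith
    have hKne : (K : ℝ) ≠ 0 := ne_of_gt hK0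
    rw [hL]; congr 1
    rw [hb]; field_simp; ring
  set e : Fin K → ℝ := fun i => if i = k then L else 0 with he
  set g : Fin K → ℝ := fun i => if i = l then L else 0 with hg
  have hlog : ∀ (m : Fin K) (E : Fin K → ℝ), E = (fun i => if i = m then L else 0) →
      ∀ i j : Fin K, Real.log (smoothOneHot K lam m i / smoothOneHot K lam m j)
        = E i - E j := by
    intro m E hE i j
    have hv : ∀ i : Fin K, Real.log (smoothOneHot K lam m i)
        = Real.log b + E i := by
      intro i
      by_cases h : i = m <;>
        simp only [smoothOneHot, h, if_true, if_false, hE, mul_one, mul_zero, zero_add]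
      · rw [hL, Real.log_div (ne_of_gt hapos) (ne_of_gt hbpos), ← hb]; ring
      · rw [← hb]; ring
    have hne : ∀ i : Fin K, smoothOneHot K lam m i ≠ 0 := by
      intro i
      by_cases h : i = m <;>
        simp only [smoothOneHot, h, if_true, if_false, mul_one, mul_zero, zero_add, ← hb] <;>
        positivity
    rw [Real.log_div (hne i) (hne j), hv i, hv j]; ring
  have hsum : ∑ i, ∑ j,
      Real.log (smoothOneHot K lam k i / smoothOneHot K lam k j) *
        Real.log (smoothOneHot K lam l i / smoothOneHot K lam l j)
      = -2 * L ^ 2 := by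
    have h1 : ∀ i j : Fin K, Real.log (smoothOneHot K lam k i / smoothOneHot K lam k j) *
        Real.log (smoothOneHot K lam l i / smoothOneHot K lam l j)
        = (e i - e j) * (g i - g j) := by
      intro i j
      rw [hlog k e he i j, hlog l g hg i j]
    simp only [h1]
    rw [double_sum_diff]
    have heg : ∑ i, e i * g i = 0 := by
      apply Finset.sum_eq_zero
      intro i _
      by_cases h : i = k
      · have : i ≠ l := h ▸ hkl
        simp [he, hg, this]
      · simp [he, h]
    have hes : ∑ i, e i = L := by simp [he]
    have hgs : ∑ i, g i = L := by simp [hg]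
    rw [heg, hes, hgs]; ring
  rw [aitchisonInner, hsum, ← hLval]
  field_simp
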